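/- Let N be a reticulation-visible phylogenetic network on a leaf set X with m = |X| ≥ 1 leaves. Then N has at most 8m − 7 vertices in total. -/

import Mathlib

/-- A directed graph with a distinguished vertex set, arc set and root,
intended to model (binary) phylogenetic networks. Since arcs form a
`Finset` of ordered pairs, there are no parallel arcs. -/
structure Net (V : Type) [DecidableEq V] where
  verts : Finset V
  arcs : Finset (V × V)
  root : V

variable {V : Type} [DecidableEq V]

namespace Net

def Arc (N : Net V) (u v : V) : Prop := (u, v) ∈ N.arcs

def outdeg (N : Net V) (v : V) : ℕ := (N.arcs.filter (fun e => e.1 = v)).card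

def indeg (N : Net V) (v : V) : ℕ := (N.arcs.filter (fun e => e.2 = v)).card

def IsLeaf (N : Net V) (v : V) : Prop := v ∈ N.verts ∧ N.outdeg v = 0

def IsRetic (N : Net V) (v : V) : Prop :=
  v ∈ N.verts ∧ N.indeg v = 2 ∧ N.outdeg v = 1

def IsTreeVtx (N : Net V) (v : V) : Prop :=
  v ∈ N.verts ∧ N.indeg v = 1 ∧ N.outdeg v = 2

/-- The set of leaves (out-degree-zero vertices); this is the taxa set `X`. -/
def leaves (N : Net V) : Finset V := N.verts.filter (fun v => N.outdeg v = 0)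

/-- The set of reticulation vertices. -/
def retics (N : Net V) : Finset V :=
  N.verts.filter (fun v => N.indeg v = 2 ∧ N.outdeg v = 1)

/-- `u` is an ancestor of `v`: there is a directed path from `u` to `v`.
(Reflexive, as in the reachability order.) -/
def Ancestor (N : Net V) (u v : V) : Prop := Relation.ReflTransGen N.Arc u v

/-- `IsPathList N u v l` : `l` is the list of vertices of a directed path
from `u` to `v` in `N`. -/
inductive IsPathList (N : Net V) : V → V → List V → Prop
  | nil (v : V) : IsPathList N v v [v]
  | cons {u w x : V} {l : List V} : N.Arc u w → IsPathList N w x l →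
      IsPathList N u x (u :: l)

/-- The leaf `ℓ` verifies the vertex `v`: every directed path from the root
to `ℓ` passes through `v`. -/
def Verifies (N : Net V) (ℓ v : V) : Prop :=
  ∀ l : List V, N.IsPathList N.root ℓ l → v ∈ l

def Visible (N : Net V) (v : V) : Prop := ∃ ℓ, N.IsLeaf ℓ ∧ N.Verifies ℓ v

def ReticVisible (N : Net V) : Prop := ∀ v, N.IsRetic v → N.Visible v

/-- `N` is a (binary) phylogenetic network: a rooted acyclic digraph with no
parallel arcs in which the root has in-degree zero and out-degree two, every
other vertex is a leaf (in-degree one, out-degree zero), a tree vertex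
(in-degree one, out-degree two) or a reticulation (in-degree two, out-degree
one); if there is a single vertex the network has no arcs. -/
def IsPhylo (N : Net V) : Prop :=
  N.root ∈ N.verts ∧
  (∀ e ∈ N.arcs, e.1 ∈ N.verts ∧ e.2 ∈ N.verts) ∧
  (∀ v : V, ¬ Relation.TransGen N.Arc v v) ∧
  (∀ v ∈ N.verts, N.Ancestor N.root v) ∧
  (if N.verts.card = 1 then N.arcs = ∅
   else
    N.indeg N.root = 0 ∧ N.outdeg N.root = 2 ∧
    ∀ v ∈ N.verts, v ≠ N.root →
      (N.indeg v = 1 ∧ N.outdeg v = 0) ∨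
      (N.indeg v = 1 ∧ N.outdeg v = 2) ∨
      (N.indeg v = 2 ∧ N.outdeg v = 1))

end Net
open scoped Classical

namespace Net

variable {V : Type} [DecidableEq V] (N : Net V)

/-! ### Path lemmas -/

lemma pl_append {a b c d : V} {l1 l2 : List V} (h1 : N.IsPathList a b l1)
    (h2 : N.Arc b c) (h3 : N.IsPathList c d l2) : N.IsPathList a d (l1 ++ l2) := by
  induction h1 with
  | nil v => exact IsPathList.cons h2 h3
  | cons harc hpl ih => exact IsPathList.cons harc (ih h2)

lemma pl_exists {a b : V} (h : N.Ancestor a b) : ∃ l, N.IsPathList a b l := by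
  induction h using Relation.ReflTransGen.head_induction_on with
  | refl => exact ⟨[b], IsPathList.nil b⟩
  | head harc _ ih =>
    obtain ⟨l, hl⟩ := ih
    exact ⟨_, IsPathList.cons harc hl⟩

lemma pl_to_anc {a b : V} {l : List V} (h : N.IsPathList a b l) : N.Ancestor a b := by
  induction h with
  | nil v => exact Relation.ReflTransGen.refl
  | cons harc _ ih => exact Relation.ReflTransGen.head harc ih

lemma pl_split {a b u : V} {l : List V} (h : N.IsPathList a b l) (hu : u ∈ l) :
    N.Ancestor a u ∧ ∃ l', N.IsPathList u b l' := by
  induction h with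
  | nil v =>
    rw [List.mem_singleton] at hu
    subst hu
    exact ⟨Relation.ReflTransGen.refl, [u], IsPathList.nil u⟩
  | @cons p w x l harc hpl ih =>
    rcases List.mem_cons.1 hu with h1 | h2
    · subst h1
      exact ⟨Relation.ReflTransGen.refl, _, IsPathList.cons harc hpl⟩
    · obtain ⟨hanc, hl'⟩ := ih h2
      exact ⟨Relation.ReflTransGen.head harc hanc, hl'⟩

lemma pl_snoc {a b c : V} {l : List V} (h : N.IsPathList a b l) (h2 : N.Arc b c) :
    N.IsPathList a c (l ++ [c]) :=
  N.pl_append h h2 (IsPathList.nil c)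

/-! ### Degree lemmas -/

lemma arc_mem_out {u v : V} (h : N.Arc u v) :
    (u, v) ∈ N.arcs.filter (fun e => e.1 = u) := by
  simp [Arc] at h ⊢; exact h

lemma arc_mem_in {u v : V} (h : N.Arc u v) :
    (u, v) ∈ N.arcs.filter (fun e => e.2 = v) := by
  simp [Arc] at h ⊢; exact h

lemma outdeg_one_unique {u v w : V} (h : N.outdeg u = 1) (h1 : N.Arc u v)
    (h2 : N.Arc u w) : v = w := by
  rw [outdeg, Finset.card_eq_one] at h
  obtain ⟨e, he⟩ := h
  have hv := N.arc_mem_out h1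
  have hw := N.arc_mem_out h2
  rw [he, Finset.mem_singleton] at hv hw
  have : (u, v) = (u, w) := hv.trans hw.symm
  exact congrArg Prod.snd this

lemma indeg_one_unique {u v w : V} (h : N.indeg u = 1) (h1 : N.Arc v u)
    (h2 : N.Arc w u) : v = w := by
  rw [indeg, Finset.card_eq_one] at h
  obtain ⟨e, he⟩ := h
  have hv := N.arc_mem_in h1
  have hw := N.arc_mem_in h2
  rw [he, Finset.mem_singleton] at hv hw
  have : (v, u) = (w, u) := hv.trans hw.symm
  exact congrArg Prod.fst this

lemma indeg_one_exists {u : V} (h : N.indeg u = 1) : ∃ p, N.Arc p u := by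
  rw [indeg, Finset.card_eq_one] at h
  obtain ⟨e, he⟩ := h
  have : e ∈ N.arcs.filter (fun e => e.2 = u) := by rw [he]; exact Finset.mem_singleton_self e
  rw [Finset.mem_filter] at this
  refine ⟨e.1, ?_⟩
  show (e.1, u) ∈ N.arcs
  rw [← this.2]
  exact this.1

lemma indeg_two_pair {u : V} (h : N.indeg u = 2) :
    ∃ p q, p ≠ q ∧ N.Arc p u ∧ N.Arc q u ∧ ∀ x, N.Arc x u → x = p ∨ x = q := by
  rw [indeg, Finset.card_eq_two] at h
  obtain ⟨e1, e2, hne, hset⟩ := h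
  have he1 : e1 ∈ N.arcs.filter (fun e => e.2 = u) := by rw [hset]; simp
  have he2 : e2 ∈ N.arcs.filter (fun e => e.2 = u) := by rw [hset]; simp
  rw [Finset.mem_filter] at he1 he2
  refine ⟨e1.1, e2.1, ?_, ?_, ?_, ?_⟩
  · intro hcontra
    apply hne
    have := he1.2.trans he2.2.symm
    exact Prod.ext hcontra this
  · show (e1.1, u) ∈ N.arcs
    rw [← he1.2]; exact he1.1
  · show (e2.1, u) ∈ N.arcs
    rw [← he2.2]; exact he2.1
  · intro x hx
    have := N.arc_mem_in hx
    rw [hset, Finset.mem_insert, Finset.mem_singleton] at this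
    rcases this with h | h
    · left; exact congrArg Prod.fst h
    · right; exact congrArg Prod.fst h

lemma outdeg_two_pair {u : V} (h : N.outdeg u = 2) :
    ∃ v w, v ≠ w ∧ N.Arc u v ∧ N.Arc u w ∧ ∀ x, N.Arc u x → x = v ∨ x = w := by
  rw [outdeg, Finset.card_eq_two] at h
  obtain ⟨e1, e2, hne, hset⟩ := h
  have he1 : e1 ∈ N.arcs.filter (fun e => e.1 = u) := by rw [hset]; simp
  have he2 : e2 ∈ N.arcs.filter (fun e => e.1 = u) := by rw [hset]; simp
  rw [Finset.mem_filter] at he1 he2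
  refine ⟨e1.2, e2.2, ?_, ?_, ?_, ?_⟩
  · intro hcontra
    apply hne
    have := he1.2.trans he2.2.symm
    exact Prod.ext this hcontra
  · show (u, e1.2) ∈ N.arcs
    rw [← he1.2]; exact he1.1
  · show (u, e2.2) ∈ N.arcs
    rw [← he2.2]; exact he2.1
  · intro x hx
    have := N.arc_mem_out hx
    rw [hset, Finset.mem_insert, Finset.mem_singleton] at this
    rcases this with h | h
    · left; exact congrArg Prod.snd h
    · right; exact congrArg Prod.snd h

lemma indeg_zero_no_parent {u p : V} (h : N.indeg u = 0) (harc : N.Arc p u) : False := by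
  have := N.arc_mem_in harc
  rw [indeg, Finset.card_eq_zero] at h
  rw [h] at this
  exact absurd this (Finset.notMem_empty _)

lemma outdeg_zero_no_child {u c : V} (h : N.outdeg u = 0) (harc : N.Arc u c) : False := by
  have := N.arc_mem_out harc
  rw [outdeg, Finset.card_eq_zero] at h
  rw [h] at this
  exact absurd this (Finset.notMem_empty _)

/-! ### Cycle helper -/

lemma no_cycle {a b : V} (hacyc : ∀ v : V, ¬ Relation.TransGen N.Arc v v)
    (h1 : N.Ancestor a b) (h2 : N.Arc b a) : False :=
  hacyc a (Relation.TransGen.tail' h1 h2)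

/-! ### Well-foundedness -/

lemma wf_arc (hmem : ∀ e ∈ N.arcs, e.1 ∈ N.verts ∧ e.2 ∈ N.verts)
    (hacyc : ∀ v : V, ¬ Relation.TransGen N.Arc v v) :
    WellFounded (fun a b : V => N.Arc a b) := by
  have key : ∀ a b : V, N.Arc a b →
      (N.verts.filter (fun x => Relation.ReflTransGen N.Arc x a)).card <
      (N.verts.filter (fun x => Relation.ReflTransGen N.Arc x b)).card := by
    intro a b hab
    apply Finset.card_lt_card
    constructor
    · intro x hx
      rw [Finset.mem_filter] at hx ⊢
      exact ⟨hx.1, hx.2.tail hab⟩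
    · intro hsub
      have hb : b ∈ N.verts.filter (fun x => Relation.ReflTransGen N.Arc x b) := by
        rw [Finset.mem_filter]
        exact ⟨(hmem _ hab).2, Relation.ReflTransGen.refl⟩
      have := hsub hb
      rw [Finset.mem_filter] at this
      exact N.no_cycle hacyc this.2 hab
  exact Subrelation.wf (fun {a b} h => key a b h)
    (measure (fun v => (N.verts.filter (fun x => Relation.ReflTransGen N.Arc x v)).card)).wf

/-! ### Structure: non-reticulation vertices, tree arcs, components -/

def NRv (N : Net V) (u : V) : Prop :=
  u ∈ N.verts ∧ ¬ (N.indeg u = 2 ∧ N.outdeg u = 1)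

def TreeArc (N : Net V) (a b : V) : Prop := N.Arc a b ∧ N.NRv a ∧ N.NRv b

def Reach (N : Net V) : V → V → Prop := Relation.ReflTransGen N.TreeArc

def IsCompRoot (N : Net V) (ρ : V) : Prop :=
  N.NRv ρ ∧ (ρ = N.root ∨ ∃ w, N.IsRetic w ∧ N.Arc w ρ)

noncomputable def comp (N : Net V) (ρ : V) : Finset V :=
  N.verts.filter (fun u => N.Reach ρ u)

lemma phylo_deg (hphylo : N.IsPhylo) (hn : ¬ N.verts.card = 1) :
    N.indeg N.root = 0 ∧ N.outdeg N.root = 2 ∧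
    ∀ v ∈ N.verts, v ≠ N.root →
      (N.indeg v = 1 ∧ N.outdeg v = 0) ∨
      (N.indeg v = 1 ∧ N.outdeg v = 2) ∨
      (N.indeg v = 2 ∧ N.outdeg v = 1) := by
  have h5 := hphylo.2.2.2.2
  rw [if_neg hn] at h5
  exact h5

lemma retic_of_not_nr {u : V} (hu : u ∈ N.verts) (h : ¬ N.NRv u) : N.IsRetic u := by
  rw [NRv] at h
  push_neg at h
  exact ⟨hu, h hu⟩

lemma nrv_root (hphylo : N.IsPhylo) (hn : ¬ N.verts.card = 1) : N.NRv N.root := by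
  refine ⟨hphylo.1, ?_⟩
  rintro ⟨h2, -⟩
  rw [(N.phylo_deg hphylo hn).1] at h2
  exact absurd h2 (by norm_num)

lemma head_ne_root (hphylo : N.IsPhylo) (hn : ¬ N.verts.card = 1) {p u : V}
    (h : N.Arc p u) : u ≠ N.root := by
  intro heq
  subst heq
  exact N.indeg_zero_no_parent (N.phylo_deg hphylo hn).1 h

lemma nr_indeg_one (hphylo : N.IsPhylo) (hn : ¬ N.verts.card = 1) {u : V}
    (hu : N.NRv u) (hne : u ≠ N.root) : N.indeg u = 1 := by
  rcases (N.phylo_deg hphylo hn).2.2 u hu.1 hne with h | h | h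
  · exact h.1
  · exact h.1
  · exact absurd h hu.2

lemma iscomproot_root (hphylo : N.IsPhylo) (hn : ¬ N.verts.card = 1) :
    N.IsCompRoot N.root := ⟨N.nrv_root hphylo hn, Or.inl rfl⟩

lemma mem_comp_self {ρ : V} (h : ρ ∈ N.verts) : ρ ∈ N.comp ρ := by
  rw [comp, Finset.mem_filter]
  exact ⟨h, Relation.ReflTransGen.refl⟩

lemma mem_comp_verts {ρ u : V} (h : u ∈ N.comp ρ) : u ∈ N.verts :=
  (Finset.mem_filter.1 h).1

lemma mem_comp_reach {ρ u : V} (h : u ∈ N.comp ρ) : N.Reach ρ u :=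
  (Finset.mem_filter.1 h).2

lemma mem_comp_nr {ρ u : V} (hρ : N.NRv ρ) (hu : u ∈ N.comp ρ) : N.NRv u := by
  rcases (N.mem_comp_reach hu).cases_tail with heq | ⟨c, _, hcu⟩
  · exact heq ▸ hρ
  · exact hcu.2.2

lemma comp_extend {ρ p u : V} (hp : p ∈ N.comp ρ) (ht : N.TreeArc p u)
    (hu : u ∈ N.verts) : u ∈ N.comp ρ := by
  rw [comp, Finset.mem_filter]
  exact ⟨hu, (N.mem_comp_reach hp).tail ht⟩

/-! ### No arc between two reticulations (uses visibility) -/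

lemma no_retic_arc (hphylo : N.IsPhylo) (hrv : N.ReticVisible) {a b : V}
    (ha : N.IsRetic a) (hb : N.IsRetic b) (hab : N.Arc a b) : False := by
  obtain ⟨h1, h2, hacyc, h4, -⟩ := hphylo
  obtain ⟨ℓ, hℓ, hver⟩ := hrv a ha
  obtain ⟨p, q0, hpq, hparc, hqarc, hall⟩ := N.indeg_two_pair hb.2.1
  -- q : the parent of b other than a
  obtain ⟨q, hqa, hq⟩ : ∃ q, q ≠ a ∧ N.Arc q b := by
    rcases hall a hab with rfl | rfl
    · exact ⟨q0, fun h => hpq h.symm, hqarc⟩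
    · exact ⟨p, hpq, hparc⟩
  -- every path from the root to q avoids a
  have havoid : ∀ l, N.IsPathList N.root q l → a ∉ l := by
    intro l hl hmem
    obtain ⟨-, l', hl'⟩ := N.pl_split hl hmem
    cases hl' with
    | nil v => exact hqa rfl
    | cons harc hrest =>
      have hb' := N.outdeg_one_unique ha.2.2 harc hab
      subst hb'
      exact N.no_cycle hacyc (N.pl_to_anc hrest) hq
  obtain ⟨l0, hl0⟩ := N.pl_exists (h4 q (h2 _ hq).1)
  have hq0 : a ∉ l0 := havoid l0 hl0
  -- a path from b to ℓ avoiding a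
  obtain ⟨l1, hl1⟩ := N.pl_exists (h4 ℓ hℓ.1)
  obtain ⟨-, l2, hl2⟩ := N.pl_split hl1 (hver l1 hl1)
  cases hl2 with
  | nil v =>
    exact absurd (ha.2.2.symm.trans hℓ.2) (by norm_num)
  | @cons a' w x l3 harc hrest =>
    have hb' := N.outdeg_one_unique ha.2.2 harc hab
    subst hb'
    have hnot : a ∉ l3 := by
      intro hmem
      obtain ⟨hanc, -⟩ := N.pl_split hrest hmem
      exact N.no_cycle hacyc hanc hab
    have hglue := N.pl_append hl0 hq hrest
    rcases List.mem_append.1 (hver _ hglue) with h | h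
    · exact hq0 h
    · exact hnot h

lemma nrv_retic_child (hphylo : N.IsPhylo) (hrv : N.ReticVisible) {v ρ : V}
    (hv : N.IsRetic v) (harc : N.Arc v ρ) : N.NRv ρ := by
  refine ⟨(hphylo.2.1 _ harc).2, ?_⟩
  intro hcond
  exact N.no_retic_arc hphylo hrv hv ⟨(hphylo.2.1 _ harc).2, hcond⟩ harc

/-! ### Existence and uniqueness of component roots -/

lemma comproot_exists (hphylo : N.IsPhylo) (hn : ¬ N.verts.card = 1) :
    ∀ u, N.NRv u → ∃ ρ, N.IsCompRoot ρ ∧ N.Reach ρ u := by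
  have hwf := N.wf_arc hphylo.2.1 hphylo.2.2.1
  intro u
  induction u using hwf.induction with
  | _ u ih =>
    intro hu
    by_cases hroot : u = N.root
    · subst hroot
      exact ⟨N.root, N.iscomproot_root hphylo hn, Relation.ReflTransGen.refl⟩
    · have hind : N.indeg u = 1 := N.nr_indeg_one hphylo hn hu hroot
      obtain ⟨p, hp⟩ := N.indeg_one_exists hind
      by_cases hnp : N.NRv p
      · obtain ⟨ρ, hρ, hr⟩ := ih p hp hnp
        exact ⟨ρ, hρ, hr.tail ⟨hp, hnp, hu⟩⟩
      · exact ⟨u, ⟨hu, Or.inr ⟨p, N.retic_of_not_nr (hphylo.2.1 _ hp).1 hnp, hp⟩⟩,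
          Relation.ReflTransGen.refl⟩

lemma comproot_of_reach (hphylo : N.IsPhylo) (hn : ¬ N.verts.card = 1) {ρ u : V}
    (hu : N.IsCompRoot u) (h : N.Reach ρ u) : ρ = u := by
  rcases h.cases_tail with heq | ⟨c, hrc, hcu⟩
  · exact heq.symm
  · exfalso
    rcases hu.2 with hur | ⟨w, hw, hwarc⟩
    · subst hur
      exact N.indeg_zero_no_parent (N.phylo_deg hphylo hn).1 hcu.1
    · have hind : N.indeg u = 1 :=
        N.nr_indeg_one hphylo hn hu.1 (N.head_ne_root hphylo hn hcu.1)
      have hwc : w = c := N.indeg_one_unique hind hwarc hcu.1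
      subst hwc
      exact hcu.2.1.2 ⟨hw.2.1, hw.2.2⟩

lemma comproot_unique (hphylo : N.IsPhylo) (hn : ¬ N.verts.card = 1) :
    ∀ u ρ1 ρ2, N.IsCompRoot ρ1 → N.IsCompRoot ρ2 →
      N.Reach ρ1 u → N.Reach ρ2 u → ρ1 = ρ2 := by
  have hwf := N.wf_arc hphylo.2.1 hphylo.2.2.1
  intro u
  induction u using hwf.induction with
  | _ u ih =>
    intro ρ1 ρ2 hρ1 hρ2 hr1 hr2
    by_cases hcr : N.IsCompRoot u
    · exact (N.comproot_of_reach hphylo hn hcr hr1).trans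
        (N.comproot_of_reach hphylo hn hcr hr2).symm
    · rcases hr1.cases_tail with heq | ⟨c1, hrc1, hc1⟩
      · exact absurd (heq ▸ hρ1) hcr
      · rcases hr2.cases_tail with heq | ⟨c2, hrc2, hc2⟩
        · exact absurd (heq ▸ hρ2) hcr
        · have hur : u ≠ N.root := by
            intro h
            exact hcr (h ▸ N.iscomproot_root hphylo hn)
          have hind : N.indeg u = 1 := N.nr_indeg_one hphylo hn hc1.2.2 hur
          have hcc : c1 = c2 := N.indeg_one_unique hind hc1.1 hc2.1
          subst hcc
          exact ih c1 hc1.1 ρ1 ρ2 hρ1 hρ2 hrc1 hrc2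

/-! ### Domination -/

def Dom (N : Net V) (v u : V) : Prop := ∀ l, N.IsPathList N.root u l → v ∈ l

lemma dom_parent {v u p : V} (h : N.Dom v u) (hne : v ≠ u) (harc : N.Arc p u) :
    N.Dom v p := by
  intro l hl
  have := h (l ++ [u]) (N.pl_snoc hl harc)
  rcases List.mem_append.1 this with h1 | h1
  · exact h1
  · rw [List.mem_singleton] at h1
    exact absurd h1 hne
lemma dom_root_eq {v : V} (h : N.Dom v N.root) : v = N.root := by
  have := h [N.root] (IsPathList.nil _)
  rwa [List.mem_singleton] at this


lemma dom_step_indeg1 (hphylo : N.IsPhylo) (hrv : N.ReticVisible) (hn : ¬ N.verts.card = 1)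
    {v ρ u : V} (hv : N.IsRetic v) (harc : N.Arc v ρ)
    (ih : ∀ y, N.Arc y u → y ∈ N.verts → N.Dom v y → y = v ∨ y ∈ N.comp ρ)
    (hu : u ∈ N.verts) (hdom : N.Dom v u) (huv : ¬ u = v) (hind : N.indeg u = 1)
    (hout : ¬ (N.indeg u = 2 ∧ N.outdeg u = 1)) : u ∈ N.comp ρ := by
  obtain ⟨p, hp⟩ := N.indeg_one_exists hind
  have hpd := N.dom_parent hdom (fun h => huv h.symm) hp
  rcases ih p hp (hphylo.2.1 _ hp).1 hpd with rfl | hpc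
  · have : u = ρ := N.outdeg_one_unique hv.2.2 hp harc
    subst this
    exact N.mem_comp_self (hphylo.2.1 _ harc).2
  · have hnru : N.NRv u := ⟨hu, hout⟩
    have hnrp : N.NRv p := N.mem_comp_nr (N.nrv_retic_child hphylo hrv hv harc) hpc
    exact N.comp_extend hpc ⟨hp, hnrp, hnru⟩ hu

lemma dom_subset (hphylo : N.IsPhylo) (hrv : N.ReticVisible) (hn : ¬ N.verts.card = 1)
    {v ρ : V} (hv : N.IsRetic v) (harc : N.Arc v ρ)
    (hno : ∀ w p q, N.IsRetic w → p ≠ q → N.Arc p w → N.Arc q w →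
      p ∈ N.comp ρ → q ∈ N.comp ρ → False) :
    ∀ u, u ∈ N.verts → N.Dom v u → u = v ∨ u ∈ N.comp ρ := by
  have hwf := N.wf_arc hphylo.2.1 hphylo.2.2.1
  intro u
  induction u using hwf.induction with
  | _ u ih =>
    intro hu hdom
    by_cases huv : u = v
    · exact Or.inl huv
    by_cases hur : u = N.root
    · exfalso
      subst hur
      have hveq := N.dom_root_eq hdom
      subst hveq
      have h2' := hv.2.1
      rw [(N.phylo_deg hphylo hn).1] at h2'
      exact absurd h2' (by norm_num)
    right
    rcases (N.phylo_deg hphylo hn).2.2 u hu hur with hcase | hcase | hcase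
    -- indeg 1 cases
    · exact N.dom_step_indeg1 hphylo hrv hn hv harc ih hu hdom huv hcase.1
        (by simp [hcase.1])
    · exact N.dom_step_indeg1 hphylo hrv hn hv harc ih hu hdom huv hcase.1
        (by simp [hcase.1])
    -- reticulation case
    · exfalso
      have huret : N.IsRetic u := ⟨hu, hcase⟩
      obtain ⟨p, q, hpq, hparc, hqarc, -⟩ := N.indeg_two_pair hcase.1
      have hpd := N.dom_parent hdom (fun h => huv h.symm) hparc
      have hqd := N.dom_parent hdom (fun h => huv h.symm) hqarc
      have hp' := ih p hparc (hphylo.2.1 _ hparc).1 hpd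
      have hq' := ih q hqarc (hphylo.2.1 _ hqarc).1 hqd
      rcases hp' with rfl | hp'
      · exact N.no_retic_arc hphylo hrv hv huret hparc
      rcases hq' with rfl | hq'
      · exact N.no_retic_arc hphylo hrv hv huret hqarc
      exact hno u p q huret hpq hparc hqarc hp' hq'

/-! ### Barren components have at least two vertices -/

lemma comp_eq_singleton {ρ : V} (hρv : ρ ∈ N.verts) (hone : (N.comp ρ).card ≤ 1) :
    N.comp ρ = {ρ} := by
  apply Finset.eq_singleton_iff_unique_mem.2
  refine ⟨N.mem_comp_self hρv, fun x hx => ?_⟩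
  exact Finset.card_le_one.1 hone x hx ρ (N.mem_comp_self hρv)

lemma barren_nonroot_big (hphylo : N.IsPhylo) (hrv : N.ReticVisible)
    (hn : ¬ N.verts.card = 1) {ρ : V} (hρ : N.IsCompRoot ρ) (hρne : ρ ≠ N.root)
    (hbarren : ∀ u ∈ N.comp ρ, N.outdeg u ≠ 0) : 2 ≤ (N.comp ρ).card := by
  by_contra hlt
  push_neg at hlt
  have hone : (N.comp ρ).card ≤ 1 := by omega
  have hρv : ρ ∈ N.verts := hρ.1.1
  have hcomp := N.comp_eq_singleton hρv hone
  obtain ⟨w, hw, hwarc⟩ := hρ.2.resolve_left hρne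
  have hno : ∀ w' p q, N.IsRetic w' → p ≠ q → N.Arc p w' → N.Arc q w' →
      p ∈ N.comp ρ → q ∈ N.comp ρ → False := by
    intro w' p q _ hpq _ _ hpc hqc
    rw [hcomp, Finset.mem_singleton] at hpc hqc
    exact hpq (hpc.trans hqc.symm)
  have hsub := N.dom_subset hphylo hrv hn hw hwarc hno
  obtain ⟨ℓ, hℓ, hver⟩ := hrv w hw
  rcases hsub ℓ hℓ.1 hver with rfl | hc
  · exact absurd (hw.2.2.symm.trans hℓ.2) (by norm_num)
  · exact hbarren ℓ hc hℓ.2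

lemma barren_root_big (hphylo : N.IsPhylo) (hn : ¬ N.verts.card = 1)
    (hbarren : ∀ u ∈ N.comp N.root, N.outdeg u ≠ 0) : 2 ≤ (N.comp N.root).card := by
  by_contra hlt
  push_neg at hlt
  have hone : (N.comp N.root).card ≤ 1 := by omega
  have hcomp := N.comp_eq_singleton hphylo.1 hone
  have hacyc := hphylo.2.2.1
  have hroot2 := (N.phylo_deg hphylo hn).2.1
  obtain ⟨w1, w2, hw12, harc1, harc2, hall⟩ := N.outdeg_two_pair hroot2
  have hchild : ∀ x, N.Arc N.root x → N.IsRetic x := by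
    intro x hx
    by_cases hnx : N.NRv x
    · exfalso
      have hxmem : x ∈ N.comp N.root :=
        N.comp_extend (N.mem_comp_self hphylo.1) ⟨hx, N.nrv_root hphylo hn, hnx⟩
          (hphylo.2.1 _ hx).2
      rw [hcomp, Finset.mem_singleton] at hxmem
      subst hxmem
      exact hacyc _ (Relation.TransGen.single hx)
    · exact N.retic_of_not_nr (hphylo.2.1 _ hx).2 hnx
  have hop : ∀ x, N.Arc N.root x → ∃ p, p ≠ N.root ∧ N.Arc p x := by
    intro x hx
    obtain ⟨p, q, hpq, hparc, hqarc, hall'⟩ := N.indeg_two_pair (hchild x hx).2.1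
    rcases hall' N.root hx with rfl | rfl
    · exact ⟨q, fun h => hpq h.symm, hqarc⟩
    · exact ⟨p, hpq, hparc⟩
  obtain ⟨p1, hp1ne, hp1⟩ := hop w1 harc1
  obtain ⟨p2, hp2ne, hp2⟩ := hop w2 harc2
  have key : ∀ p x, N.Arc p x → p ≠ N.root →
      Relation.ReflTransGen N.Arc w1 p ∨ Relation.ReflTransGen N.Arc w2 p := by
    intro p x hpx hpne
    have hanc := hphylo.2.2.2.1 p (hphylo.2.1 _ hpx).1
    rcases Relation.ReflTransGen.cases_head hanc with heq | ⟨c, hc, hcp⟩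
    · exact absurd heq.symm hpne
    · rcases hall c hc with rfl | rfl
      · exact Or.inl hcp
      · exact Or.inr hcp
  rcases key p1 w1 hp1 hp1ne with h | h
  · exact hacyc w1 (Relation.TransGen.tail' h hp1)
  · rcases key p2 w2 hp2 hp2ne with h' | h'
    · have c1 : Relation.ReflTransGen N.Arc w2 w1 := h.tail hp1
      exact hacyc w2 (Relation.TransGen.tail' (c1.trans h') hp2)
    · exact hacyc w2 (Relation.TransGen.tail' h' hp2)

/-! ### Counting -/

lemma mem_retics {u : V} : u ∈ N.retics ↔ N.IsRetic u := by
  simp only [retics, Finset.mem_filter, IsRetic]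

lemma arc_of_mem {e : V × V} (h : e ∈ N.arcs) : N.Arc e.1 e.2 := h

noncomputable def TV (N : Net V) : Finset V :=
  N.verts.filter (fun v => N.indeg v = 1 ∧ N.outdeg v = 2)

noncomputable def Roots (N : Net V) : Finset V :=
  N.verts.filter (fun ρ => N.IsCompRoot ρ)

noncomputable def LeafyR (N : Net V) : Finset V :=
  N.Roots.filter (fun ρ => ∃ ℓ ∈ N.comp ρ, N.outdeg ℓ = 0)

noncomputable def BarrenR (N : Net V) : Finset V :=
  N.Roots.filter (fun ρ => ¬ ∃ ℓ ∈ N.comp ρ, N.outdeg ℓ = 0)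

noncomputable def toRetic (N : Net V) (ρ : V) : Finset (V × V) :=
  N.arcs.filter (fun e => e.1 ∈ N.comp ρ ∧ (N.indeg e.2 = 2 ∧ N.outdeg e.2 = 1))

/-- Partition of the vertex set. -/
lemma verts_eq (hphylo : N.IsPhylo) (hn : ¬ N.verts.card = 1) :
    N.verts = insert N.root (N.leaves ∪ (N.TV ∪ N.retics)) := by
  have hd := N.phylo_deg hphylo hn
  ext v
  simp only [Finset.mem_insert, Finset.mem_union, leaves, TV, retics, Finset.mem_filter]
  constructor
  · intro hv
    by_cases hr : v = N.root
    · exact Or.inl hr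
    · rcases hd.2.2 v hv hr with h | h | h
      · exact Or.inr (Or.inl ⟨hv, h.2⟩)
      · exact Or.inr (Or.inr (Or.inl ⟨hv, h⟩))
      · exact Or.inr (Or.inr (Or.inr ⟨hv, h⟩))
  · rintro (rfl | ⟨h, -⟩ | ⟨h, -⟩ | ⟨h, -⟩)
    · exact hphylo.1
    all_goals assumption

lemma root_not_mem (hphylo : N.IsPhylo) (hn : ¬ N.verts.card = 1) :
    N.root ∉ N.leaves ∪ (N.TV ∪ N.retics) := by
  have hd := N.phylo_deg hphylo hn
  simp only [Finset.mem_union, leaves, TV, retics, Finset.mem_filter]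
  push_neg
  refine ⟨fun _ => ?_, fun _ h => ?_, fun _ h => ?_⟩
  · rw [hd.2.1]; norm_num
  · rw [hd.1] at h; norm_num at h
  · rw [hd.1] at h; norm_num at h

lemma disj1 : Disjoint N.leaves (N.TV ∪ N.retics) := by
  rw [Finset.disjoint_left]
  intro a ha hb
  simp only [leaves, Finset.mem_filter] at ha
  simp only [Finset.mem_union, TV, retics, Finset.mem_filter] at hb
  rcases hb with h | h
  · rw [ha.2] at h; norm_num at h
  · rw [ha.2] at h; norm_num at h

lemma disj2 : Disjoint N.TV N.retics := by
  rw [Finset.disjoint_left]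
  intro a ha hb
  simp only [TV, Finset.mem_filter] at ha
  simp only [retics, Finset.mem_filter] at hb
  rw [ha.2.1] at hb
  norm_num at hb

lemma card_partition (hphylo : N.IsPhylo) (hn : ¬ N.verts.card = 1) :
    N.verts.card = 1 + N.leaves.card + N.TV.card + N.retics.card := by
  rw [N.verts_eq hphylo hn, Finset.card_insert_of_notMem (N.root_not_mem hphylo hn),
    Finset.card_union_of_disjoint N.disj1, Finset.card_union_of_disjoint N.disj2]
  ring

lemma sum_outdeg_eq (hphylo : N.IsPhylo) :
    N.arcs.card = ∑ v ∈ N.verts, N.outdeg v :=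
  Finset.card_eq_sum_card_fiberwise (fun e he => (hphylo.2.1 e he).1)

lemma sum_indeg_eq (hphylo : N.IsPhylo) :
    N.arcs.card = ∑ v ∈ N.verts, N.indeg v :=
  Finset.card_eq_sum_card_fiberwise (fun e he => (hphylo.2.1 e he).2)


lemma leaf_indeg_one (hphylo : N.IsPhylo) (hn : ¬ N.verts.card = 1) {v : V}
    (hv : v ∈ N.verts) (h0 : N.outdeg v = 0) : N.indeg v = 1 := by
  have hd := N.phylo_deg hphylo hn
  have hne : v ≠ N.root := by
    intro h
    rw [h, hd.2.1] at h0
    norm_num at h0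
  rcases hd.2.2 v hv hne with h | h | h
  · exact h.1
  · rw [h.2] at h0; norm_num at h0
  · rw [h.2] at h0; norm_num at h0

lemma handshake (hphylo : N.IsPhylo) (hn : ¬ N.verts.card = 1) :
    N.TV.card + 2 = N.leaves.card + N.retics.card := by
  have hd := N.phylo_deg hphylo hn
  have ho := N.sum_outdeg_eq hphylo
  have hi := N.sum_indeg_eq hphylo
  rw [N.verts_eq hphylo hn, Finset.sum_insert (N.root_not_mem hphylo hn),
    Finset.sum_union N.disj1, Finset.sum_union N.disj2] at ho hi
  have ho1 : ∑ v ∈ N.leaves, N.outdeg v = 0 := by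
    apply Finset.sum_eq_zero
    intro v hv
    exact (Finset.mem_filter.1 hv).2
  have ho2 : ∑ v ∈ N.TV, N.outdeg v = 2 * N.TV.card := by
    rw [Finset.sum_congr rfl (fun v hv => (Finset.mem_filter.1 hv).2.2),
      Finset.sum_const, smul_eq_mul, mul_comm]
  have ho3 : ∑ v ∈ N.retics, N.outdeg v = N.retics.card := by
    rw [Finset.sum_congr rfl (fun v hv => (Finset.mem_filter.1 hv).2.2),
      Finset.sum_const, smul_eq_mul, mul_one]
  have hi1 : ∑ v ∈ N.leaves, N.indeg v = N.leaves.card := by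
    have key : ∀ v ∈ N.leaves, N.indeg v = 1 := fun v hv =>
      N.leaf_indeg_one hphylo hn (Finset.mem_filter.1 hv).1 (Finset.mem_filter.1 hv).2
    rw [Finset.sum_congr rfl key, Finset.sum_const, smul_eq_mul, mul_one]
  have hi2 : ∑ v ∈ N.TV, N.indeg v = N.TV.card := by
    rw [Finset.sum_congr rfl (fun v hv => (Finset.mem_filter.1 hv).2.1),
      Finset.sum_const, smul_eq_mul, mul_one]
  have hi3 : ∑ v ∈ N.retics, N.indeg v = 2 * N.retics.card := by
    rw [Finset.sum_congr rfl (fun v hv => (Finset.mem_filter.1 hv).2.1),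
      Finset.sum_const, smul_eq_mul, mul_comm]
  rw [ho1, ho2, ho3, hd.2.1] at ho
  rw [hi1, hi2, hi3, hd.1] at hi
  omega

/-- Every non-root component root is the child of a unique reticulation. -/
lemma roots_card (hphylo : N.IsPhylo) (hrv : N.ReticVisible) (hn : ¬ N.verts.card = 1) :
    N.Roots.card = N.retics.card + 1 := by
  have hd := N.phylo_deg hphylo hn
  have hrootmem : N.root ∈ N.Roots := by
    rw [Roots, Finset.mem_filter]
    exact ⟨hphylo.1, N.iscomproot_root hphylo hn⟩
  have hbij : (N.arcs.filter (fun e => N.IsRetic e.1)).card = (N.Roots.erase N.root).card := by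
    apply Finset.card_bij (fun e _ => e.2)
    · intro e he
      rw [Finset.mem_filter] at he
      have harc : N.Arc e.1 e.2 := he.1
      have hnr : N.NRv e.2 := N.nrv_retic_child hphylo hrv he.2 harc
      rw [Finset.mem_erase, Roots, Finset.mem_filter]
      exact ⟨N.head_ne_root hphylo hn harc, hnr.1, hnr, Or.inr ⟨e.1, he.2, harc⟩⟩
    · intro e1 he1 e2 he2 heq
      rw [Finset.mem_filter] at he1 he2
      have harc1 : N.Arc e1.1 e1.2 := he1.1
      have harc2 : N.Arc e2.1 e2.2 := he2.1
      rw [heq] at harc1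
      have hnr : N.NRv e2.2 := N.nrv_retic_child hphylo hrv he2.2 harc2
      have hind : N.indeg e2.2 = 1 :=
        N.nr_indeg_one hphylo hn hnr (N.head_ne_root hphylo hn harc2)
      have := N.indeg_one_unique hind harc1 harc2
      exact Prod.ext this heq
    · intro ρ hρ
      rw [Finset.mem_erase, Roots, Finset.mem_filter] at hρ
      obtain ⟨w, hw, hwarc⟩ := hρ.2.2.2.resolve_left hρ.1
      refine ⟨(w, ρ), ?_, rfl⟩
      rw [Finset.mem_filter]
      exact ⟨hwarc, hw⟩
  have hE0 : (N.arcs.filter (fun e => N.IsRetic e.1)).card = N.retics.card := by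
    rw [Finset.card_eq_sum_card_fiberwise
      (f := Prod.fst) (t := N.retics)
      (fun e he => N.mem_retics.2 (Finset.mem_filter.1 he).2)]
    rw [Finset.sum_congr rfl (fun w hw => ?_), Finset.sum_const, smul_eq_mul, mul_one]
    rw [Finset.filter_filter]
    have : (N.arcs.filter (fun e => N.IsRetic e.1 ∧ e.1 = w)) =
        (N.arcs.filter (fun e => e.1 = w)) := by
      apply Finset.filter_congr
      intro e he
      constructor
      · intro h; exact h.2
      · intro h; exact ⟨h ▸ N.mem_retics.1 hw, h⟩
    rw [this]
    exact (N.mem_retics.1 hw).2.2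
  have := Finset.card_erase_add_one hrootmem
  omega

lemma leafy_le (hphylo : N.IsPhylo) (hn : ¬ N.verts.card = 1) :
    N.LeafyR.card ≤ N.leaves.card := by
  classical
  apply Finset.card_le_card_of_injOn
    (fun ρ => if h : ∃ ℓ ∈ N.comp ρ, N.outdeg ℓ = 0 then h.choose else ρ)
  · intro ρ hρ
    simp only [Finset.mem_coe] at hρ ⊢
    rw [LeafyR, Finset.mem_filter] at hρ
    rw [dif_pos hρ.2]
    obtain ⟨hmem, hdeg⟩ := hρ.2.choose_spec
    rw [leaves, Finset.mem_filter]
    exact ⟨N.mem_comp_verts hmem, hdeg⟩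
  · intro ρ1 h1 ρ2 h2 heq
    simp only [Finset.mem_coe] at h1 h2
    rw [LeafyR, Finset.mem_filter, Roots, Finset.mem_filter] at h1 h2
    dsimp only at heq
    rw [dif_pos h1.2, dif_pos h2.2] at heq
    obtain ⟨hm1, -⟩ := h1.2.choose_spec
    obtain ⟨hm2, -⟩ := h2.2.choose_spec
    rw [heq] at hm1
    exact N.comproot_unique hphylo hn _ ρ1 ρ2 h1.1.2 h2.1.2
      (N.mem_comp_reach hm1) (N.mem_comp_reach hm2)

lemma toretic_card_ge (hphylo : N.IsPhylo) (hrv : N.ReticVisible)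
    (hn : ¬ N.verts.card = 1) {ρ : V} (hρmem : ρ ∈ N.BarrenR) :
    3 ≤ (N.toRetic ρ).card := by
  rw [BarrenR, Finset.mem_filter, Roots, Finset.mem_filter] at hρmem
  have hρ : N.IsCompRoot ρ := hρmem.1.2
  have hbarren : ∀ u ∈ N.comp ρ, N.outdeg u ≠ 0 := by
    intro u hu h0
    exact hρmem.2 ⟨u, hu, h0⟩
  have hbig : 2 ≤ (N.comp ρ).card := by
    by_cases hr : ρ = N.root
    · subst hr; exact N.barren_root_big hphylo hn hbarren
    · exact N.barren_nonroot_big hphylo hrv hn hρ hr hbarren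
  have hNRρ : N.NRv ρ := hρ.1
  -- all out-degrees in the component are 2
  have hout2 : ∀ u ∈ N.comp ρ, N.outdeg u = 2 := by
    intro u hu
    have hnr := N.mem_comp_nr hNRρ hu
    by_cases hr : u = N.root
    · rw [hr]; exact (N.phylo_deg hphylo hn).2.1
    · rcases (N.phylo_deg hphylo hn).2.2 u (N.mem_comp_verts hu) hr with h | h | h
      · exact absurd h.2 (hbarren u hu)
      · exact h.2
      · exact absurd h hnr.2
  -- arcs leaving the component
  have hfrom : (N.arcs.filter (fun e => e.1 ∈ N.comp ρ)).card = 2 * (N.comp ρ).card := by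
    rw [Finset.card_eq_sum_card_fiberwise (f := Prod.fst) (t := N.comp ρ)
      (s := N.arcs.filter (fun e => e.1 ∈ N.comp ρ)) (fun e he => (Finset.mem_filter.1 he).2)]
    rw [Finset.sum_congr rfl (fun u hu => ?_), Finset.sum_const, smul_eq_mul, mul_comm]
    rw [Finset.filter_filter]
    have : N.arcs.filter (fun e => e.1 ∈ N.comp ρ ∧ e.1 = u) =
        N.arcs.filter (fun e => e.1 = u) := by
      apply Finset.filter_congr
      intro e he
      constructor
      · intro h; exact h.2
      · intro h; exact ⟨h ▸ hu, h⟩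
    rw [this]
    exact hout2 u hu
  -- internal arcs
  have hint : (N.arcs.filter (fun e => e.1 ∈ N.comp ρ ∧ e.2 ∈ N.comp ρ)).card
      = (N.comp ρ).card - 1 := by
    have hbij : (N.arcs.filter (fun e => e.1 ∈ N.comp ρ ∧ e.2 ∈ N.comp ρ)).card
        = ((N.comp ρ).erase ρ).card := by
      apply Finset.card_bij (fun e _ => e.2)
      · intro e he
        rw [Finset.mem_filter] at he
        have harc : N.Arc e.1 e.2 := he.1
        rw [Finset.mem_erase]
        refine ⟨?_, he.2.2⟩
        intro heq
        rw [heq] at harc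
        rcases hρ.2 with hr | ⟨w, hw, hwarc⟩
        · exact N.indeg_zero_no_parent (hr ▸ (N.phylo_deg hphylo hn).1) harc
        · have hρne : ρ ≠ N.root := N.head_ne_root hphylo hn hwarc
          have hind : N.indeg ρ = 1 := N.nr_indeg_one hphylo hn hNRρ hρne
          have hwe : w = e.1 := N.indeg_one_unique hind hwarc harc
          exact (N.mem_comp_nr hNRρ he.2.1).2 (hwe ▸ ⟨hw.2.1, hw.2.2⟩)
      · intro e1 he1 e2 he2 heq
        rw [Finset.mem_filter] at he1 he2
        have harc1 : N.Arc e1.1 e1.2 := he1.1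
        have harc2 : N.Arc e2.1 e2.2 := he2.1
        rw [heq] at harc1
        have hnr := N.mem_comp_nr hNRρ he2.2.2
        have hind : N.indeg e2.2 = 1 :=
          N.nr_indeg_one hphylo hn hnr (N.head_ne_root hphylo hn harc2)
        exact Prod.ext (N.indeg_one_unique hind harc1 harc2) heq
      · intro u hu
        rw [Finset.mem_erase] at hu
        rcases (N.mem_comp_reach hu.2).cases_tail with heq | ⟨c, hrc, hcu⟩
        · exact absurd heq hu.1
        · have hcmem : c ∈ N.comp ρ := by
            rw [comp, Finset.mem_filter]
            exact ⟨hcu.2.1.1, hrc⟩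
          refine ⟨(c, u), ?_, rfl⟩
          rw [Finset.mem_filter]
          exact ⟨hcu.1, hcmem, hu.2⟩
    rw [hbij, Finset.card_erase_of_mem (N.mem_comp_self hNRρ.1)]
  -- split and conclude
  have hsplit : N.arcs.filter (fun e => e.1 ∈ N.comp ρ) =
      (N.arcs.filter (fun e => e.1 ∈ N.comp ρ ∧ e.2 ∈ N.comp ρ)) ∪ N.toRetic ρ := by
    rw [toRetic, ← Finset.filter_or]
    apply Finset.filter_congr
    intro e he
    constructor
    · intro h
      by_cases hnr : N.NRv e.2
      · left
        refine ⟨h, N.comp_extend ?_ ⟨he, N.mem_comp_nr hNRρ h, hnr⟩ hnr.1⟩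
        exact h
      · right
        have := N.retic_of_not_nr (hphylo.2.1 _ he).2 hnr
        exact ⟨h, this.2.1, this.2.2⟩
    · rintro (h | h)
      · exact h.1
      · exact h.1
  have hdisj : Disjoint (N.arcs.filter (fun e => e.1 ∈ N.comp ρ ∧ e.2 ∈ N.comp ρ))
      (N.toRetic ρ) := by
    rw [Finset.disjoint_left]
    intro e he1 he2
    rw [Finset.mem_filter] at he1
    rw [toRetic, Finset.mem_filter] at he2
    exact (N.mem_comp_nr hNRρ he1.2.2).2 he2.2.2
  have := Finset.card_union_of_disjoint hdisj
  rw [← hsplit] at this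
  omega

lemma barren_bound (hphylo : N.IsPhylo) (hrv : N.ReticVisible)
    (hn : ¬ N.verts.card = 1) :
    3 * N.BarrenR.card ≤ 2 * N.retics.card := by
  have hRA : (N.arcs.filter (fun e => N.indeg e.2 = 2 ∧ N.outdeg e.2 = 1)).card
      = 2 * N.retics.card := by
    rw [Finset.card_eq_sum_card_fiberwise (f := Prod.snd) (t := N.retics)
      (fun e he => N.mem_retics.2 ⟨(hphylo.2.1 _ (Finset.mem_filter.1 he).1).2,
        (Finset.mem_filter.1 he).2⟩)]
    rw [Finset.sum_congr rfl (fun w hw => ?_), Finset.sum_const, smul_eq_mul, mul_comm]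
    rw [Finset.filter_filter]
    have : N.arcs.filter (fun e => (N.indeg e.2 = 2 ∧ N.outdeg e.2 = 1) ∧ e.2 = w) =
        N.arcs.filter (fun e => e.2 = w) := by
      apply Finset.filter_congr
      intro e he
      constructor
      · intro h; exact h.2
      · intro h
        refine ⟨?_, h⟩
        rw [h]
        exact ⟨(N.mem_retics.1 hw).2.1, (N.mem_retics.1 hw).2.2⟩
    rw [this]
    exact (N.mem_retics.1 hw).2.1
  have hdisj : ∀ ρ1 ∈ N.BarrenR, ∀ ρ2 ∈ N.BarrenR, ρ1 ≠ ρ2 →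
      Disjoint (N.toRetic ρ1) (N.toRetic ρ2) := by
    intro ρ1 h1 ρ2 h2 hne
    rw [Finset.disjoint_left]
    intro e he1 he2
    rw [toRetic, Finset.mem_filter] at he1 he2
    rw [BarrenR, Finset.mem_filter, Roots, Finset.mem_filter] at h1 h2
    exact hne (N.comproot_unique hphylo hn e.1 ρ1 ρ2 h1.1.2 h2.1.2
      (N.mem_comp_reach he1.2.1) (N.mem_comp_reach he2.2.1))
  have hsub : N.BarrenR.biUnion N.toRetic ⊆
      N.arcs.filter (fun e => N.indeg e.2 = 2 ∧ N.outdeg e.2 = 1) := by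
    intro e he
    rw [Finset.mem_biUnion] at he
    obtain ⟨ρ, -, he⟩ := he
    rw [toRetic, Finset.mem_filter] at he
    rw [Finset.mem_filter]
    exact ⟨he.1, he.2.2⟩
  have hcard := Finset.card_biUnion hdisj
  have hge : ∀ ρ ∈ N.BarrenR, 3 ≤ (N.toRetic ρ).card :=
    fun ρ hρ => N.toretic_card_ge hphylo hrv hn hρ
  have hsum : N.BarrenR.card * 3 ≤ ∑ ρ ∈ N.BarrenR, (N.toRetic ρ).card := by
    calc N.BarrenR.card * 3 = N.BarrenR.card • 3 := by rw [smul_eq_mul]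
    _ ≤ ∑ ρ ∈ N.BarrenR, (N.toRetic ρ).card := Finset.card_nsmul_le_sum _ _ _ hge
  have hle := Finset.card_le_card hsub
  rw [hRA] at hle
  rw [← hcard] at hsum
  omega

end Net
/-- A reticulation-visible phylogenetic network with `m ≥ 1` leaves has at
most `8m - 7` vertices in total. -/
theorem stmt_0 {V : Type} [DecidableEq V] (N : Net V)
    (hphylo : N.IsPhylo) (hrv : N.ReticVisible)
    (hm : 1 ≤ N.leaves.card) :
    N.verts.card ≤ 8 * N.leaves.card - 7 := by
  by_cases hn : N.verts.card = 1
  · have harcs : N.arcs = ∅ := by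
      have h5 := hphylo.2.2.2.2
      rwa [if_pos hn] at h5
    have hl : N.leaves = N.verts := by
      apply Finset.filter_true_of_mem
      intro v _
      simp [Net.outdeg, harcs]
    rw [hl, hn]
  · have hpart := N.card_partition hphylo hn
    have hhs := N.handshake hphylo hn
    have hroots := N.roots_card hphylo hrv hn
    have hsplit := Finset.card_filter_add_card_filter_not
      (s := N.Roots) (p := fun ρ => ∃ ℓ ∈ N.comp ρ, N.outdeg ℓ = 0)
    have hleafy := N.leafy_le hphylo hn
    have hbar := N.barren_bound hphylo hrv hn
    have hLB : N.LeafyR.card + N.BarrenR.card = N.Roots.card := hsplit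
    omega
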